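/- arXiv:1907.11780 — 6 statements merged into one kernel-verified Lean document; each statement's English description precedes it below -/
import Mathlib

section
/- Let f : ℝ^d → ℝ^c, x a point with predicted label ŷ (so f_ŷ(x) > f_k(x) for all k ≠ ŷ). Suppose for each k ≠ ŷ the function g_k = f_ŷ − f_k is Lipschitz with constant L_k on the closed ball B(x, r). Then for any z with ‖z‖ < min( min_{k≠ŷ} (f_ŷ(x) − f_k(x))/L_k , r ), the point x + z is still classified as ŷ, i.e., f_ŷ(x+z) > f_k(x+z) for all k ≠ ŷ. Consequently the distance from x to the decision boundary is at least min( min_{k≠ŷ} (f_ŷ(x) − f_k(x))/L_k , r ). -/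
/-- Lipschitz robustness lower bound (Hein & Andriushchenko): if `f x yhat > f x k` for all
`k ≠ yhat`, and each `g_k = f · yhat − f · k` is `L k`-Lipschitz on the closed ball `B(x, r)`,
then every perturbation `z` with
`‖z‖ < min (⨅_{k ≠ yhat} (f x yhat − f x k) / L k) r` keeps the prediction `yhat`; consequently
any point not classified as `yhat` is at distance at least this bound from `x`. -/
theorem stmt9 {d c : ℕ} (f : EuclideanSpace ℝ (Fin d) → Fin c → ℝ)
    (x : EuclideanSpace ℝ (Fin d)) (yhat : Fin c) (hc : 2 ≤ c)
    (hpred : ∀ k, k ≠ yhat → f x k < f x yhat)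
    (L : Fin c → ℝ) (hL : ∀ k, 0 < L k) (r : ℝ) (hr : 0 < r)
    (hLip : ∀ k, k ≠ yhat → ∀ u ∈ Metric.closedBall x r, ∀ v ∈ Metric.closedBall x r,
      |(f u yhat - f u k) - (f v yhat - f v k)| ≤ L k * ‖u - v‖) :
    (∀ z : EuclideanSpace ℝ (Fin d),
      ‖z‖ < min (⨅ k : {k : Fin c // k ≠ yhat}, (f x yhat - f x k.1) / L k.1) r →
      ∀ k, k ≠ yhat → f (x + z) k < f (x + z) yhat) ∧
    (∀ u : EuclideanSpace ℝ (Fin d), ¬ (∀ k, k ≠ yhat → f u k < f u yhat) →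
      min (⨅ k : {k : Fin c // k ≠ yhat}, (f x yhat - f x k.1) / L k.1) r ≤ dist x u) := by
  have hmain : ∀ z : EuclideanSpace ℝ (Fin d),
      ‖z‖ < min (⨅ k : {k : Fin c // k ≠ yhat}, (f x yhat - f x k.1) / L k.1) r →
      ∀ k, k ≠ yhat → f (x + z) k < f (x + z) yhat := by
    intro z hz k hk
    have hzr : ‖z‖ < r := lt_of_lt_of_le hz (min_le_right _ _)
    have hmem : x + z ∈ Metric.closedBall x r := by
      simp [Metric.mem_closedBall, dist_eq_norm]
      exact le_of_lt hzr
    have hxmem : x ∈ Metric.closedBall x r := Metric.mem_closedBall_self hr.le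
    have hinf : ‖z‖ < (f x yhat - f x k) / L k := by
      refine lt_of_lt_of_le (lt_of_lt_of_le hz (min_le_left _ _)) ?_
      exact ciInf_le (Finite.bddBelow_range _) (⟨k, hk⟩ : {k : Fin c // k ≠ yhat})
    have hlk : L k * ‖z‖ < f x yhat - f x k := by
      have := (lt_div_iff₀ (hL k)).mp hinf
      linarith [this]
    have hlip := hLip k hk (x + z) hmem x hxmem
    have hsub : (x + z) - x = z := add_sub_cancel_left x z
    rw [hsub] at hlip
    have := abs_le.mp hlip
    linarith [this.1, this.2]
  refine ⟨hmain, ?_⟩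
  intro u hu
  by_contra h
  push_neg at h
  have := hmain (u - x) (by rwa [norm_sub_rev, ← dist_eq_norm])
  rw [add_sub_cancel] at this
  exact hu this
end

section
/- Let φ : ℝ → ℝ be decreasing, continuous, bounded below, differentiable at 0 with φ′(0) < 0, and let ψ(t) = max(0, τ − t) − max(0, −t) for some τ ≥ 0. Then the regularized loss ℓ = φ + λψ (λ ≥ 0) is Fisher consistent: for every η ∈ [0,1] with η ≠ 1/2, inf { C_η(α) : α(2η − 1) ≤ 0 } > inf { C_η(α) : α ∈ ℝ }, where C_η(α) = η ℓ(α) + (1 − η) ℓ(−α). -/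
open Filter Topology

/-- The average-margin regularizer `ψ(t) = max(0, τ − t) − max(0, −t)`. -/
noncomputable def psi (τ t : ℝ) : ℝ := max 0 (τ - t) - max 0 (-t)

/-- The conditional risk `C_η(α) = η ℓ(α) + (1 − η) ℓ(−α)`. -/
noncomputable def Crisk (ℓ : ℝ → ℝ) (η α : ℝ) : ℝ := η * ℓ α + (1 - η) * ℓ (-α)

lemma psi_eq {τ : ℝ} (hτ : 0 ≤ τ) (t : ℝ) : psi τ t = min τ (max 0 (τ - t)) := by
  unfold psi
  rcases le_total t 0 with h | h
  · have e1 : max 0 (τ - t) = τ - t := max_eq_right (by linarith)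
    have e2 : max 0 (-t) = -t := max_eq_right (by linarith)
    rw [e1, e2, min_eq_left (by linarith)]
    ring
  · have e2 : max 0 (-t) = 0 := max_eq_left (by linarith)
    rcases le_total t τ with h2 | h2
    · have e1 : max 0 (τ - t) = τ - t := max_eq_right (by linarith)
      rw [e1, e2, min_eq_right (by linarith)]
      ring
    · have e1 : max 0 (τ - t) = 0 := max_eq_left (by linarith)
      rw [e1, e2, min_eq_right hτ]
      ring

lemma psi_anti {τ : ℝ} (hτ : 0 ≤ τ) : Antitone (psi τ) := by
  intro a b hab
  rw [psi_eq hτ, psi_eq hτ]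
  exact min_le_min le_rfl (max_le_max le_rfl (by linarith))

lemma psi_le {τ : ℝ} (hτ : 0 ≤ τ) (t : ℝ) : psi τ t ≤ τ := by
  rw [psi_eq hτ]; exact min_le_left _ _

lemma psi_nonneg {τ : ℝ} (hτ : 0 ≤ τ) (t : ℝ) : 0 ≤ psi τ t := by
  rw [psi_eq hτ]; exact le_min hτ (le_max_left _ _)

lemma psi_zero {τ : ℝ} (hτ : 0 ≤ τ) : psi τ 0 = τ := by
  rw [psi_eq hτ]; simp [max_eq_right hτ]

lemma psi_cont (τ : ℝ) : Continuous (psi τ) := by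
  unfold psi; fun_prop

lemma exists_pos_lt {f : ℝ → ℝ} {d : ℝ} (hd : HasDerivAt f d 0) (h : d < 0) :
    ∃ x, 0 < x ∧ f x < f 0 := by
  have h1 := hasDerivAt_iff_tendsto_slope.mp hd
  have h2 : ∀ᶠ x in 𝓝[≠] (0:ℝ), slope f 0 x < 0 := h1.eventually_lt_const h
  have h3 : ∀ᶠ x in 𝓝[>] (0:ℝ), slope f 0 x < 0 :=
    h2.filter_mono (nhdsWithin_mono 0 (fun x hx => ne_of_gt hx))
  obtain ⟨x, hx1, hx2⟩ := (h3.and (eventually_mem_nhdsWithin)).exists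
  refine ⟨x, hx2, ?_⟩
  rw [slope_def_field] at hx1
  have hx2' : (0:ℝ) < x := hx2
  have hdiv : (f x - f 0) / x < 0 := by simpa using hx1
  rcases div_neg_iff.mp hdiv with ⟨ha, hb⟩ | ⟨ha, hb⟩ <;> linarith

lemma exists_neg_lt {f : ℝ → ℝ} {d : ℝ} (hd : HasDerivAt f d 0) (h : 0 < d) :
    ∃ x, x < 0 ∧ f x < f 0 := by
  have h0 : HasDerivAt f d ((fun x : ℝ => -x) 0) := by simpa using hd
  have hneg : HasDerivAt (fun x : ℝ => f (-x)) (-d) 0 := by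
    simpa [Function.comp_def] using h0.comp 0 (hasDerivAt_neg (0:ℝ))
  obtain ⟨x, hx, hfx⟩ := exists_pos_lt hneg (by linarith)
  exact ⟨-x, by linarith, by simpa using hfx⟩

set_option maxHeartbeats 1600000 in
/-- Fisher consistency of the regularized loss `ℓ = φ + λψ`: if `φ` is decreasing,
continuous, bounded below, differentiable at `0` with `φ′(0) < 0`, then for every
`η ∈ [0,1]` with `η ≠ 1/2`, the infimum of `C_η` over `{α : α(2η−1) ≤ 0}` is strictly
greater than the global infimum of `C_η`. -/
theorem stmt10 (φ : ℝ → ℝ) (hanti : Antitone φ) (hcont : Continuous φ)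
    (hbdd : BddBelow (Set.range φ)) (φ' : ℝ) (hderiv : HasDerivAt φ φ' 0)
    (hφ' : φ' < 0) (τ lam : ℝ) (hτ : 0 ≤ τ) (hlam : 0 ≤ lam)
    (η : ℝ) (hη0 : 0 ≤ η) (hη1 : η ≤ 1) (hη : η ≠ 1 / 2) :
    sInf (Set.range fun α => Crisk (fun t => φ t + lam * psi τ t) η α)
      < sInf {v | ∃ α : ℝ, α * (2 * η - 1) ≤ 0 ∧
          v = Crisk (fun t => φ t + lam * psi τ t) η α} := by
  set ℓ : ℝ → ℝ := fun t => φ t + lam * psi τ t with hℓdef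
  have h1η : (0:ℝ) ≤ 1 - η := by linarith
  have hψanti := psi_anti hτ
  have hψle := psi_le hτ
  have hψnn := psi_nonneg hτ
  have hψ0 := psi_zero hτ
  have hℓanti : Antitone ℓ := by
    intro a b hab
    have h1 := hanti hab
    have h2 := mul_le_mul_of_nonneg_left (hψanti hab) hlam
    simp only [hℓdef]; linarith
  obtain ⟨B, hB⟩ := hbdd
  have hℓB : ∀ t, B ≤ ℓ t := by
    intro t
    have h1 : B ≤ φ t := hB ⟨t, rfl⟩
    have h2 : 0 ≤ lam * psi τ t := mul_nonneg hlam (hψnn t)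
    simp only [hℓdef]; linarith
  have hCB : ∀ α, B ≤ Crisk ℓ η α := by
    intro α
    have h1 := hℓB α
    have h2 := hℓB (-α)
    unfold Crisk
    nlinarith [mul_nonneg hη0 (sub_nonneg.2 h1), mul_nonneg h1η (sub_nonneg.2 h2)]
  have hrbdd : BddBelow (Set.range fun α => Crisk ℓ η α) := by
    refine ⟨B, ?_⟩
    rintro v ⟨α, rfl⟩
    exact hCB α
  set m := sInf (Set.range fun α => Crisk ℓ η α) with hm
  have hmle : ∀ α, m ≤ Crisk ℓ η α := fun α => csInf_le hrbdd ⟨α, rfl⟩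
  have hC0 : Crisk ℓ η 0 = ℓ 0 := by unfold Crisk; rw [neg_zero]; ring
  have hℓcont : Continuous ℓ := by
    simp only [hℓdef]
    exact hcont.add (continuous_const.mul (psi_cont τ))
  -- derivative of the φ-part of the risk
  have hφneg : HasDerivAt (fun x : ℝ => φ (-x)) (-φ') 0 := by
    have h0 : HasDerivAt φ φ' ((fun x : ℝ => -x) 0) := by simpa using hderiv
    simpa [Function.comp_def] using h0.comp 0 (hasDerivAt_neg (0:ℝ))
  have hh : HasDerivAt (fun α : ℝ => η * φ α + (1 - η) * φ (-α))
      (η * φ' + (1 - η) * (-φ')) 0 := (hderiv.const_mul η).add (hφneg.const_mul (1 - η))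
  -- small positive s₁ with ℓ s₁ < ℓ 0 and ℓ 0 - ℓ s₁ < ε
  have hs₁ : ∀ ε : ℝ, 0 < ε → ∃ s₁, 0 < s₁ ∧ ℓ s₁ < ℓ 0 ∧ ℓ 0 - ℓ s₁ < ε := by
    intro ε hε
    have h1 := hasDerivAt_iff_tendsto_slope.mp hderiv
    have h2 : ∀ᶠ x in 𝓝[≠] (0:ℝ), slope φ 0 x < 0 := h1.eventually_lt_const hφ'
    have h3 : ∀ᶠ x in 𝓝[>] (0:ℝ), slope φ 0 x < 0 :=
      h2.filter_mono (nhdsWithin_mono 0 (fun x hx => ne_of_gt hx))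
    have h4 : ∀ᶠ x in 𝓝 (0:ℝ), ℓ 0 - ε < ℓ x :=
      (hℓcont.continuousAt).eventually_const_lt (by linarith)
    have h5 : ∀ᶠ x in 𝓝[>] (0:ℝ), ℓ 0 - ε < ℓ x := h4.filter_mono nhdsWithin_le_nhds
    obtain ⟨x, ⟨hx1, hx2⟩, hx3⟩ := ((h3.and h5).and (eventually_mem_nhdsWithin)).exists
    have hx3' : (0:ℝ) < x := hx3
    rw [slope_def_field] at hx1
    have hdiv : (φ x - φ 0) / x < 0 := by simpa using hx1
    have hφx : φ x < φ 0 := by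
      rcases div_neg_iff.mp hdiv with ⟨ha, hb⟩ | ⟨ha, hb⟩ <;> linarith
    have hψx : lam * psi τ x ≤ lam * psi τ 0 :=
      mul_le_mul_of_nonneg_left (hψanti (le_of_lt hx3')) hlam
    refine ⟨x, hx3', ?_, by linarith⟩
    simp only [hℓdef]
    linarith
  -- wrong-side set is nonempty
  have hwne : (Crisk ℓ η 0) ∈ {v | ∃ α : ℝ, α * (2 * η - 1) ≤ 0 ∧ v = Crisk ℓ η α} :=
    ⟨0, by norm_num, rfl⟩
  rcases lt_or_gt_of_ne hη with hη2 | hη2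
  · -- η < 1/2 : wrong side is α ≥ 0
    have hd : 0 < η * φ' + (1 - η) * (-φ') := by nlinarith
    obtain ⟨x, hxneg, hfx⟩ := exists_neg_lt hh hd
    have hα₀ : Crisk ℓ η x < Crisk ℓ η 0 := by
      simp only [neg_zero] at hfx
      have p1 : psi τ (-x) ≤ τ := hψle (-x)
      have p2 : psi τ x ≤ τ := hψle x
      unfold Crisk
      simp only [hℓdef, neg_zero, hψ0]
      nlinarith [mul_nonneg (mul_nonneg hlam hη0) (sub_nonneg.2 p2),
        mul_nonneg (mul_nonneg hlam h1η) (sub_nonneg.2 p1)]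
    set ε := Crisk ℓ η 0 - Crisk ℓ η x with hεdef
    have hε : 0 < ε := by simp only [hεdef]; linarith
    obtain ⟨s₁, hs₁pos, hs₁lt, hs₁ε⟩ := hs₁ ε hε
    set δ := ℓ 0 - ℓ s₁ with hδdef
    have hδpos : 0 < δ := by simp only [hδdef]; linarith
    have hδε : δ < ε := hs₁ε
    refine lt_of_lt_of_le (b := min (m + (1 - 2*η) * δ) (Crisk ℓ η 0 - δ)) ?_ ?_
    · refine lt_min ?_ ?_
      · nlinarith
      · have := hmle x
        simp only [hεdef] at hδε
        linarith
    · refine le_csInf ⟨_, hwne⟩ ?_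
      rintro v ⟨α, hαs, rfl⟩
      have hα : 0 ≤ α := by nlinarith
      rcases le_total α s₁ with hc | hc
      · refine le_trans (min_le_right _ _) ?_
        have l1 : ℓ 0 ≤ ℓ (-α) := hℓanti (by linarith)
        have l2 : ℓ s₁ ≤ ℓ α := hℓanti hc
        rw [hC0]
        unfold Crisk
        simp only [hδdef]
        nlinarith [mul_nonneg hη0 (sub_nonneg.2 l2), mul_nonneg h1η (sub_nonneg.2 l1),
          mul_nonneg h1η (le_of_lt hδpos)]
      · refine le_trans (min_le_left _ _) ?_
        have hm2 := hmle (-α)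
        have l1 : ℓ 0 ≤ ℓ (-α) := hℓanti (by linarith)
        have l2 : ℓ α ≤ ℓ s₁ := hℓanti hc
        unfold Crisk at hm2 ⊢
        simp only [neg_neg] at hm2
        have q1 : (0:ℝ) ≤ 1 - 2*η := by linarith
        nlinarith [mul_nonneg q1 (sub_nonneg.2 l1), mul_nonneg q1 (sub_nonneg.2 l2)]
  · -- η > 1/2 : wrong side is α ≤ 0
    have hd : η * φ' + (1 - η) * (-φ') < 0 := by nlinarith
    obtain ⟨x, hxpos, hfx⟩ := exists_pos_lt hh hd
    have hα₀ : Crisk ℓ η x < Crisk ℓ η 0 := by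
      simp only [neg_zero] at hfx
      have p1 : psi τ x ≤ τ := hψle x
      have p2 : psi τ (-x) ≤ τ := hψle (-x)
      unfold Crisk
      simp only [hℓdef, neg_zero, hψ0]
      nlinarith [mul_nonneg (mul_nonneg hlam hη0) (sub_nonneg.2 p1),
        mul_nonneg (mul_nonneg hlam h1η) (sub_nonneg.2 p2)]
    set ε := Crisk ℓ η 0 - Crisk ℓ η x with hεdef
    have hε : 0 < ε := by simp only [hεdef]; linarith
    obtain ⟨s₁, hs₁pos, hs₁lt, hs₁ε⟩ := hs₁ ε hε
    set δ := ℓ 0 - ℓ s₁ with hδdef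
    have hδpos : 0 < δ := by simp only [hδdef]; linarith
    have hδε : δ < ε := hs₁ε
    refine lt_of_lt_of_le (b := min (m + (2*η - 1) * δ) (Crisk ℓ η 0 - δ)) ?_ ?_
    · refine lt_min ?_ ?_
      · nlinarith
      · have := hmle x
        simp only [hεdef] at hδε
        linarith
    · refine le_csInf ⟨_, hwne⟩ ?_
      rintro v ⟨α, hαs, rfl⟩
      have hα : α ≤ 0 := by nlinarith
      rcases le_total (-α) s₁ with hc | hc
      · refine le_trans (min_le_right _ _) ?_
        have l1 : ℓ 0 ≤ ℓ α := hℓanti hα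
        have l2 : ℓ s₁ ≤ ℓ (-α) := hℓanti hc
        rw [hC0]
        unfold Crisk
        simp only [hδdef]
        nlinarith [mul_nonneg hη0 (sub_nonneg.2 l1), mul_nonneg h1η (sub_nonneg.2 l2),
          mul_nonneg hη0 (le_of_lt hδpos)]
      · refine le_trans (min_le_left _ _) ?_
        have hm2 := hmle (-α)
        have l1 : ℓ 0 ≤ ℓ α := hℓanti hα
        have l2 : ℓ (-α) ≤ ℓ s₁ := hℓanti hc
        unfold Crisk at hm2 ⊢
        simp only [neg_neg] at hm2
        have q1 : (0:ℝ) ≤ 2*η - 1 := by linarith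
        nlinarith [mul_nonneg q1 (sub_nonneg.2 l1), mul_nonneg q1 (sub_nonneg.2 l2)]
end

section
/- Let ℓ : ℝ → ℝ be a decreasing function and η > 1/2. For any α ≤ −α₀ < 0, the conditional risk satisfies C_η(α) − C_η(−α) ≥ (2η − 1)(ℓ(0) − ℓ(α₀)), where C_η(α) = η ℓ(α) + (1 − η) ℓ(−α). In particular, if ℓ(α₀) < ℓ(0), flipping the sign of α strictly decreases C_η. -/
/-- Sign-flipping inequality: for decreasing `ℓ`, `η > 1/2`, `α ≤ −α₀ < 0`,
`C_η(α) − C_η(−α) ≥ (2η − 1)(ℓ(0) − ℓ(α₀))`; in particular if `ℓ(α₀) < ℓ(0)` then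
flipping the sign of `α` strictly decreases `C_η`. -/
theorem stmt11 (ℓ : ℝ → ℝ) (hanti : Antitone ℓ) (η : ℝ) (hη : 1 / 2 < η) (hη1 : η ≤ 1)
    (α₀ : ℝ) (hα₀ : 0 < α₀) (α : ℝ) (hα : α ≤ -α₀) :
    (2 * η - 1) * (ℓ 0 - ℓ α₀) ≤ Crisk ℓ η α - Crisk ℓ η (-α) ∧
    (ℓ α₀ < ℓ 0 → Crisk ℓ η (-α) < Crisk ℓ η α) := by
  have h1 : ℓ (-α₀) ≤ ℓ α := hanti hα
  have h2 : ℓ (-α) ≤ ℓ α₀ := hanti (by linarith)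
  have h3 : ℓ 0 ≤ ℓ (-α₀) := hanti (by linarith)
  have key : (2 * η - 1) * (ℓ 0 - ℓ α₀) ≤ Crisk ℓ η α - Crisk ℓ η (-α) := by
    simp only [Crisk, neg_neg]
    nlinarith
  refine ⟨key, fun hlt => ?_⟩
  nlinarith
end

section
/- For η > 1/2 and any decreasing loss ℓ bounded below with m = inf_α C_η(α), if there exists α₀ > 0 with ℓ(α₀) < ℓ(0), then inf { C_η(α) : α ≤ −α₀ } ≥ (2η − 1)(ℓ(0) − ℓ(α₀)) + m > m. -/
/-- For `η > 1/2` and a decreasing loss `ℓ` bounded below with `m = inf_α C_η(α)`: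
if `α₀ > 0` satisfies `ℓ(α₀) < ℓ(0)`, then
`inf { C_η(α) : α ≤ −α₀ } ≥ (2η − 1)(ℓ(0) − ℓ(α₀)) + m > m`. -/
theorem stmt12 (ℓ : ℝ → ℝ) (hanti : Antitone ℓ) (hbdd : BddBelow (Set.range ℓ))
    (η : ℝ) (hη : 1 / 2 < η) (hη1 : η ≤ 1)
    (m : ℝ) (hm : m = sInf (Set.range fun α => Crisk ℓ η α))
    (α₀ : ℝ) (hα₀ : 0 < α₀) (hdrop : ℓ α₀ < ℓ 0) :
    (2 * η - 1) * (ℓ 0 - ℓ α₀) + m ≤ sInf {v | ∃ α : ℝ, α ≤ -α₀ ∧ v = Crisk ℓ η α} ∧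
    m < sInf {v | ∃ α : ℝ, α ≤ -α₀ ∧ v = Crisk ℓ η α} := by
  obtain ⟨b, hb⟩ := hbdd
  have hηpos : (0:ℝ) ≤ η := by linarith
  have hη1' : (0:ℝ) ≤ 1 - η := by linarith
  have hbl : ∀ x, b ≤ ℓ x := fun x => hb (Set.mem_range_self x)
  have hbC : BddBelow (Set.range fun α => Crisk ℓ η α) := by
    refine ⟨b, ?_⟩
    rintro v ⟨α, rfl⟩
    have h1 := hbl α
    have h2 := hbl (-α)
    simp only [Crisk]
    nlinarith
  have hmle : ∀ α, m ≤ Crisk ℓ η α := by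
    intro α
    rw [hm]
    exact csInf_le hbC ⟨α, rfl⟩
  have h2η : (0:ℝ) < 2 * η - 1 := by linarith
  have key : ∀ α, α ≤ -α₀ →
      (2 * η - 1) * (ℓ 0 - ℓ α₀) + m ≤ Crisk ℓ η α := by
    intro α hα
    have h1 : ℓ (-α₀) ≤ ℓ α := hanti hα
    have h2 : ℓ 0 ≤ ℓ (-α₀) := hanti (by linarith)
    have h3 : ℓ (-α) ≤ ℓ α₀ := hanti (by linarith)
    have h4 : m ≤ Crisk ℓ η (-α) := hmle (-α)
    have h5 : Crisk ℓ η α = (2 * η - 1) * (ℓ α - ℓ (-α)) + Crisk ℓ η (-α) := by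
      simp only [Crisk, neg_neg]; ring
    rw [h5]
    have : (2 * η - 1) * (ℓ 0 - ℓ α₀) ≤ (2 * η - 1) * (ℓ α - ℓ (-α)) := by
      apply mul_le_mul_of_nonneg_left (by linarith) (le_of_lt h2η)
    linarith
  have hne : {v | ∃ α : ℝ, α ≤ -α₀ ∧ v = Crisk ℓ η α}.Nonempty :=
    ⟨Crisk ℓ η (-α₀), -α₀, le_refl _, rfl⟩
  have hfirst : (2 * η - 1) * (ℓ 0 - ℓ α₀) + m ≤
      sInf {v | ∃ α : ℝ, α ≤ -α₀ ∧ v = Crisk ℓ η α} := by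
    apply le_csInf hne
    rintro v ⟨α, hα, rfl⟩
    exact key α hα
  refine ⟨hfirst, lt_of_lt_of_le ?_ hfirst⟩
  nlinarith
end

section
/- For a multiclass linear classifier in feature space with weight vectors w_1, …, w_c and predicted class ŷ for a feature vector φ (i.e., ⟨w_ŷ, φ⟩ > ⟨w_k, φ⟩ for all k ≠ ŷ), the Euclidean distance from φ to the decision boundary equals min_{k ≠ ŷ} ⟨w_ŷ − w_k, φ⟩ / ‖w_ŷ − w_k‖. -/
open scoped RealInnerProductSpace

/-- For a multiclass linear classifier with weights `w 1, …, w c` predicting class `yhat`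
at the feature vector `φ` (i.e. `⟪w yhat, φ⟫ > ⟪w k, φ⟫` for `k ≠ yhat`), the distance
from `φ` to the boundary of the decision region
`F = {z | ∀ k, ⟪w k, z⟫ ≤ ⟪w yhat, z⟫}` equals
`min_{k ≠ yhat} ⟪w yhat − w k, φ⟫ / ‖w yhat − w k‖`. -/
theorem stmt16 {E : Type*} [NormedAddCommGroup E] [InnerProductSpace ℝ E]
    {c : ℕ} (hc : 2 ≤ c) (w : Fin c → E) (yhat : Fin c) (φ : E)
    (hw : ∀ k, k ≠ yhat → w k ≠ w yhat)
    (hpred : ∀ k, k ≠ yhat → ⟪w k, φ⟫ < ⟪w yhat, φ⟫) :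
    Metric.infDist φ (frontier {z : E | ∀ k, ⟪w k, z⟫ ≤ ⟪w yhat, z⟫})
      = ⨅ k : {k : Fin c // k ≠ yhat}, ⟪w yhat - w k.1, φ⟫ / ‖w yhat - w k.1‖ := by
  classical
  set S : Set E := {z : E | ∀ k, ⟪w k, z⟫ ≤ ⟪w yhat, z⟫} with hS
  -- index type nonempty
  haveI : Nontrivial (Fin c) := Fin.nontrivial_iff_two_le.mpr hc
  obtain ⟨k₁, hk₁⟩ := exists_ne yhat
  haveI hne : Nonempty {k : Fin c // k ≠ yhat} := ⟨⟨k₁, hk₁⟩⟩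
  set t : {k : Fin c // k ≠ yhat} → ℝ :=
    fun k => ⟪w yhat - w k.1, φ⟫ / ‖w yhat - w k.1‖ with ht
  have hvne : ∀ k : {k : Fin c // k ≠ yhat}, w yhat - w k.1 ≠ 0 := fun k =>
    sub_ne_zero.mpr (Ne.symm (hw k.1 k.2))
  have hvpos : ∀ k : {k : Fin c // k ≠ yhat}, (0:ℝ) < ‖w yhat - w k.1‖ := fun k =>
    norm_pos_iff.mpr (hvne k)
  have hip : ∀ k : {k : Fin c // k ≠ yhat}, (0:ℝ) < ⟪w yhat - w k.1, φ⟫ := by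
    intro k
    rw [inner_sub_left]
    exact sub_pos.mpr (hpred k.1 k.2)
  have htpos : ∀ k, 0 < t k := fun k => div_pos (hip k) (hvpos k)
  -- minimizer
  obtain ⟨k₀, hk₀⟩ := Finite.exists_min t
  have hiInf : (⨅ k, t k) = t k₀ :=
    le_antisymm (ciInf_le (Finite.bddBelow_range t) k₀) (le_ciInf hk₀)
  -- S is closed
  have hScl : IsClosed S := by
    have : S = ⋂ k, {z : E | ⟪w k, z⟫ ≤ ⟪w yhat, z⟫} := by
      ext z; simp [hS, Set.mem_iInter]
    rw [this]
    exact isClosed_iInter fun k =>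
      isClosed_le (Continuous.inner continuous_const continuous_id)
        (Continuous.inner continuous_const continuous_id)
  -- the open strict region is inside the interior
  set U : Set E := ⋂ k : {k : Fin c // k ≠ yhat}, {z : E | ⟪w k.1, z⟫ < ⟪w yhat, z⟫}
    with hU
  have hUopen : IsOpen U :=
    isOpen_iInter_of_finite fun k =>
      isOpen_lt (Continuous.inner continuous_const continuous_id)
        (Continuous.inner continuous_const continuous_id)
  have hUS : U ⊆ S := by
    intro z hz k
    by_cases hk : k = yhat
    · subst hk; exact le_rfl
    · exact le_of_lt (Set.mem_iInter.mp hz ⟨k, hk⟩)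
  have hUint : U ⊆ interior S := interior_maximal hUS hUopen
  -- the candidate boundary point
  set v : E := w yhat - w k₀.1 with hv
  set u : E := ‖v‖⁻¹ • (-v) with hu
  have hunorm : ‖u‖ = 1 := by
    rw [hu, norm_smul, norm_neg, norm_inv, norm_norm]
    field_simp [ne_of_gt (hvpos k₀)]
    exact div_self (ne_of_gt (hvpos k₀))
  have hvu : ⟪v, u⟫ = -‖v‖ := by
    rw [hu, real_inner_smul_right, inner_neg_right, real_inner_self_eq_norm_sq]
    field_simp [ne_of_gt (hvpos k₀)]
  set z₀ : E := φ + t k₀ • u with hz₀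
  have hvz₀ : ⟪v, z₀⟫ = 0 := by
    rw [hz₀, inner_add_right, real_inner_smul_right, hvu, ht]
    rw [hv]
    field_simp [ne_of_gt (hvpos k₀)]
    ring
  -- z₀ ∈ S
  have hz₀S : z₀ ∈ S := by
    intro k
    by_cases hk : k = yhat
    · subst hk; exact le_rfl
    · have key : (0:ℝ) ≤ ⟪w yhat - w k, z₀⟫ := by
        have hcs : ⟪w yhat - w k, u⟫ ≥ -‖w yhat - w k‖ := by
          have := abs_real_inner_le_norm (w yhat - w k) u
          rw [hunorm, mul_one] at this
          linarith [neg_abs_le (⟪w yhat - w k, u⟫ : ℝ)]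
        have hphi : ⟪w yhat - w k, φ⟫ = t ⟨k, hk⟩ * ‖w yhat - w k‖ := by
          rw [ht, div_mul_cancel₀]
          exact ne_of_gt (hvpos ⟨k, hk⟩)
        have hmin : t k₀ ≤ t ⟨k, hk⟩ := hk₀ ⟨k, hk⟩
        have : ⟪w yhat - w k, z₀⟫
            = ⟪w yhat - w k, φ⟫ + t k₀ * ⟪w yhat - w k, u⟫ := by
          rw [hz₀, inner_add_right, real_inner_smul_right]
        rw [this, hphi]
        have h1 : t k₀ * ⟪w yhat - w k, u⟫ ≥ t k₀ * (-‖w yhat - w k‖) :=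
          mul_le_mul_of_nonneg_left hcs (le_of_lt (htpos k₀))
        nlinarith [hvpos ⟨k, hk⟩, htpos k₀]
      rw [inner_sub_left] at key
      linarith
  -- z₀ ∉ interior S
  have hz₀ni : z₀ ∉ interior S := by
    intro hin
    obtain ⟨ε, hε, hball⟩ := Metric.isOpen_iff.mp isOpen_interior z₀ hin
    have hy : z₀ + (ε/2) • u ∈ interior S := by
      apply hball
      rw [Metric.mem_ball, dist_eq_norm]
      have : z₀ + (ε/2) • u - z₀ = (ε/2) • u := by abel
      rw [this, norm_smul, hunorm, mul_one]
      rw [Real.norm_eq_abs, abs_of_pos (by linarith)]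
      linarith
    have hyS : z₀ + (ε/2) • u ∈ S := interior_subset hy
    have := hyS k₀.1
    have hvy : ⟪v, z₀ + (ε/2) • u⟫ = (ε/2) * (-‖v‖) := by
      rw [inner_add_right, hvz₀, real_inner_smul_right, hvu, zero_add]
    rw [hv, inner_sub_left] at hvy
    nlinarith [hvpos k₀]
  have hz₀fr : z₀ ∈ frontier S := by
    rw [hScl.frontier_eq]
    exact ⟨hz₀S, hz₀ni⟩
  have hdz₀ : dist φ z₀ = t k₀ := by
    rw [dist_eq_norm, hz₀]
    have : φ - (φ + t k₀ • u) = -(t k₀ • u) := by abel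
    rw [this, norm_neg, norm_smul, hunorm, mul_one, Real.norm_eq_abs,
      abs_of_pos (htpos k₀)]
  rw [show (⨅ k : {k : Fin c // k ≠ yhat}, ⟪w yhat - w k.1, φ⟫ / ‖w yhat - w k.1‖)
      = ⨅ k, t k from rfl, hiInf]
  apply le_antisymm
  · calc Metric.infDist φ (frontier S) ≤ dist φ z₀ :=
          Metric.infDist_le_dist_of_mem hz₀fr
      _ = t k₀ := hdz₀
  · rw [Metric.infDist_eq_iInf]
    haveI : Nonempty (frontier S) := ⟨⟨z₀, hz₀fr⟩⟩
    apply le_ciInf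
    rintro ⟨z, hz⟩
    rw [hScl.frontier_eq] at hz
    obtain ⟨hzS, hzni⟩ := hz
    have hzU : z ∉ U := fun h => hzni (hUint h)
    rw [hU, Set.mem_iInter] at hzU
    push_neg at hzU
    obtain ⟨k, hk⟩ := hzU
    have hk' : ⟪w yhat - w k.1, z⟫ ≤ 0 := by
      simp only [Set.mem_setOf_eq, not_lt] at hk
      rw [inner_sub_left]; linarith
    have hcs : ⟪w yhat - w k.1, φ - z⟫ ≤ ‖w yhat - w k.1‖ * ‖φ - z‖ :=
      real_inner_le_norm _ _
    have hsplit : ⟪w yhat - w k.1, φ⟫ = ⟪w yhat - w k.1, φ - z⟫ + ⟪w yhat - w k.1, z⟫ := by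
      rw [← inner_add_right]; congr 1; abel
    have htk : t k ≤ dist φ z := by
      rw [ht, dist_eq_norm, div_le_iff₀ (hvpos k)]
      calc ⟪w yhat - w k.1, φ⟫ ≤ ⟪w yhat - w k.1, φ - z⟫ := by
            rw [hsplit]; linarith
        _ ≤ ‖w yhat - w k.1‖ * ‖φ - z‖ := hcs
        _ = ‖φ - z‖ * ‖w yhat - w k.1‖ := by ring
    exact le_trans (hk₀ k) htk
end

section
/- Let ℓ : ℝ → ℝ be continuous, decreasing, and bounded below, with η > 1/2 and global conditional-risk infimum m = inf_α C_η(α). Suppose α₀ > 0 satisfies C_η(α₀) < C_η(0). Then inf { C_η(α) : −α₀ ≤ α ≤ 0 } > m. -/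
/-- For a continuous, decreasing, bounded-below loss `ℓ`, `η > 1/2`, with global
conditional-risk infimum `m`, if `α₀ > 0` satisfies `C_η(α₀) < C_η(0)` then
`inf { C_η(α) : −α₀ ≤ α ≤ 0 } > m`. -/
theorem stmt19 (ℓ : ℝ → ℝ) (hcont : Continuous ℓ) (hanti : Antitone ℓ)
    (hbdd : BddBelow (Set.range ℓ)) (η : ℝ) (hη : 1 / 2 < η) (hη1 : η ≤ 1)
    (m : ℝ) (hm : m = sInf (Set.range fun α => Crisk ℓ η α))
    (α₀ : ℝ) (hα₀ : 0 < α₀) (hdrop : Crisk ℓ η α₀ < Crisk ℓ η 0) :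
    m < sInf {v | ∃ α : ℝ, -α₀ ≤ α ∧ α ≤ 0 ∧ v = Crisk ℓ η α} := by
  obtain ⟨b, hb⟩ := hbdd
  have hb' : ∀ x, b ≤ ℓ x := fun x => hb ⟨x, rfl⟩
  -- Crisk is bounded below by b
  have hCbdd : ∀ β : ℝ, b ≤ Crisk ℓ η β := by
    intro β
    have h1 := hb' β
    have h2 := hb' (-β)
    unfold Crisk
    nlinarith [hη, hη1]
  have hmle : ∀ β : ℝ, m ≤ Crisk ℓ η β := by
    intro β
    rw [hm]
    exact csInf_le ⟨b, fun v ⟨x, hx⟩ => hx ▸ hCbdd x⟩ ⟨β, rfl⟩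
  -- continuity of Crisk
  have hCcont : Continuous (fun α => Crisk ℓ η α) := by
    unfold Crisk
    fun_prop
  -- minimizer on the compact interval
  have hK : IsCompact (Set.Icc (-α₀) 0) := isCompact_Icc
  have hKne : (Set.Icc (-α₀) 0).Nonempty := ⟨0, by constructor <;> linarith⟩
  obtain ⟨a, haK, hamin⟩ := hK.exists_isMinOn hKne hCcont.continuousOn
  -- the set equals the image
  have hset : {v | ∃ α : ℝ, -α₀ ≤ α ∧ α ≤ 0 ∧ v = Crisk ℓ η α}
      = (fun α => Crisk ℓ η α) '' Set.Icc (-α₀) 0 := by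
    ext v
    constructor
    · rintro ⟨α, h1, h2, rfl⟩; exact ⟨α, ⟨h1, h2⟩, rfl⟩
    · rintro ⟨α, ⟨h1, h2⟩, rfl⟩; exact ⟨α, h1, h2, rfl⟩
  rw [hset]
  have hlb : ∀ v ∈ (fun α => Crisk ℓ η α) '' Set.Icc (-α₀) 0, Crisk ℓ η a ≤ v := by
    rintro v ⟨α, hα, rfl⟩
    exact hamin hα
  have hinf : Crisk ℓ η a ≤ sInf ((fun α => Crisk ℓ η α) '' Set.Icc (-α₀) 0) :=
    le_csInf (hKne.image _) hlb
  -- it suffices to show m < Crisk ℓ η a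
  have key : m < Crisk ℓ η a := by
    obtain ⟨ha1, ha2⟩ := haK
    rcases eq_or_lt_of_le ha2 with h0 | hneg
    · -- a = 0
      calc m ≤ Crisk ℓ η α₀ := hmle α₀
        _ < Crisk ℓ η 0 := hdrop
        _ = Crisk ℓ η a := by rw [h0]
    · -- a < 0
      have hle : ℓ (-a) ≤ ℓ a := hanti (by linarith)
      rcases eq_or_lt_of_le hle with heq | hlt
      · -- ℓ constant on [a, -a], so Crisk a = Crisk 0
        have h1 : ℓ a ≤ ℓ 0 := by
          have := hanti (le_of_lt hneg)
          -- ℓ 0 ≤ ℓ a from antitone; we need ℓ 0 between ℓ(-a) and ℓ a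
          have h2 : ℓ 0 ≤ ℓ a := hanti (le_of_lt hneg)
          have h3 : ℓ (-a) ≤ ℓ 0 := hanti (by linarith)
          linarith [heq]
        have h2 : ℓ 0 ≤ ℓ a := hanti (le_of_lt hneg)
        have h3 : ℓ a = ℓ 0 := le_antisymm h1 h2
        have h4 : ℓ (-a) = ℓ 0 := by linarith [heq]
        have h5 : Crisk ℓ η a = Crisk ℓ η 0 := by
          unfold Crisk
          rw [h3, h4]
          ring_nf
        calc m ≤ Crisk ℓ η α₀ := hmle α₀
          _ < Crisk ℓ η 0 := hdrop
          _ = Crisk ℓ η a := h5.symm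
      · -- strict: Crisk a > Crisk (-a) ≥ m
        have h6 : Crisk ℓ η (-a) < Crisk ℓ η a := by
          unfold Crisk
          rw [neg_neg]
          nlinarith [hη]
        calc m ≤ Crisk ℓ η (-a) := hmle (-a)
          _ < Crisk ℓ η a := h6
  linarith
end
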